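/- The halving map α : [0,2] → [0,1], x ↦ x/2, together with juxtaposition of intervals, makes the object 1 an idempotent object of the category whose objects are natural numbers and whose morphisms m → n are piecewise-linear dyadic bijections [0,m] → [0,n]; and every morphism φ : m → n of this category factorizes as φ = α_T ∘ α_S^{-1} for some p and forests S (with m roots, p leaves) and T (with n roots, p leaves). -/

import Mathlib

inductive BinTree : Type
  | leaf : BinTree
  | node : BinTree → BinTree → BinTree
deriving DecidableEq

/-- The number of leaves of a binary tree. -/
def BinTree.leaves : BinTree → ℕ
  | .leaf => 1
  | .node l r => l.leaves + r.leaves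

/-- Graft trees onto the leaves of a tree (left to right), threading the list:
returns the grafted tree together with the unused trees. -/
def BinTree.graftAux : BinTree → List BinTree → BinTree × List BinTree
  | .leaf, [] => (.leaf, [])
  | .leaf, t :: ts => (t, ts)
  | .node l r, ts =>
      ((BinTree.node (l.graftAux ts).1 ((r.graftAux (l.graftAux ts).2)).1),
        (r.graftAux (l.graftAux ts).2).2)

/-- Graft the trees of `ts` onto the leaves of `t`, in left-to-right order. -/
def BinTree.graft (t : BinTree) (ts : List BinTree) : BinTree := (t.graftAux ts).1

/-- `σ` is a subtree of `ρ` (sharing the same root) iff `ρ` is obtained from `σ`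
by grafting trees onto its leaves. -/
def BinTree.IsSubtree (σ ρ : BinTree) : Prop :=
  ∃ ts : List BinTree, ts.length = σ.leaves ∧ ρ = σ.graft ts

/-- `ω_i`: attach the two-leafed tree Y to the `i`-th leaf (0-indexed) of a tree. -/
def BinTree.expand : BinTree → ℕ → BinTree
  | .leaf, _ => .node .leaf .leaf
  | .node l r, i =>
      if i < l.leaves then .node (l.expand i) r else .node l (r.expand (i - l.leaves))

def IsDyadic (x : ℝ) : Prop := ∃ (a : ℤ) (b : ℕ), x = (a : ℝ) / 2 ^ b

/-- `f` restricts to a bijection `[0,m] → [0,n]` that is piecewise linear with finitely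
many pieces, slopes integer powers of `2`, and all breakpoints at dyadic rational
coordinates: a morphism `m ⟶ n` of the category `𝒜`. -/
def DyadicPL (m n : ℕ) (f : ℝ → ℝ) : Prop :=
  Set.BijOn f (Set.Icc 0 m) (Set.Icc 0 n) ∧
  ∃ (N : ℕ) (pts : Fin (N + 1) → ℝ), StrictMono pts ∧
    pts 0 = 0 ∧ pts (Fin.last N) = m ∧
    (∀ i, IsDyadic (pts i) ∧ IsDyadic (f (pts i))) ∧
    ∀ i : Fin N, ∃ k : ℤ, ∀ x ∈ Set.Icc (pts i.castSucc) (pts i.succ),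
      f x = f (pts i.castSucc) + (2 : ℝ) ^ k * (x - pts i.castSucc)

/-- The map `[0,m] → [0,1]` induced by an `m`-leafed binary tree, built from halving
and juxtaposition. -/
noncomputable def treeMap : BinTree → ℝ → ℝ
  | .leaf => fun x => x
  | .node l r => fun x =>
      if x ≤ (l.leaves : ℝ) then treeMap l x / 2
      else treeMap r (x - l.leaves) / 2 + 1 / 2

/-- The map `α_T : [0,p] → [0,k]` induced by a forest `T` with `p` leaves and `k`
roots, by juxtaposition of the tree maps. -/
noncomputable def forestMap : List BinTree → ℝ → ℝ
  | [] => fun x => x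
  | t :: ts => fun x =>
      if x ≤ (t.leaves : ℝ) then treeMap t x else forestMap ts (x - t.leaves) + 1

-- ===== auxiliary lemmas =====

lemma exists_block (n : ℕ) (b : ℕ → ℕ) (hmono : ∀ j < n, b j < b (j+1)) :
    ∀ c : ℕ, b 0 ≤ c → c < b n → ∃ j, j < n ∧ b j ≤ c ∧ c < b (j+1) := by
  induction n with
  | zero => intro c h1 h2; omega
  | succ n ih =>
    intro c h1 h2
    by_cases hc : c < b n
    · obtain ⟨j, hj, h⟩ := ih (fun j hj => hmono j (by omega)) c h1 hc
      exact ⟨j, by omega, h⟩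
    · exact ⟨n, by omega, by omega, h2⟩

lemma exists_piece {N : ℕ} (pts : Fin (N+1) → ℝ) (hm : StrictMono pts) {x : ℝ}
    (h0 : pts 0 ≤ x) (h1 : x < pts (Fin.last N)) :
    ∃ i : Fin N, pts i.castSucc ≤ x ∧ x < pts i.succ := by
  classical
  have h0N : 0 < N := by
    rcases Nat.eq_zero_or_pos N with h | h
    · subst h
      exfalso
      have : pts 0 = pts (Fin.last 0) := by congr
      linarith [this ▸ h0]
    · exact h
  set s : Finset (Fin (N+1)) := Finset.univ.filter (fun i => pts i ≤ x) with hs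
  have hne : s.Nonempty := ⟨0, by simp [hs, h0]⟩
  set i0 := s.max' hne with hi0
  have hi0mem : i0 ∈ s := s.max'_mem hne
  have hi0le : pts i0 ≤ x := by simpa [hs] using hi0mem
  have hi0lt : (i0 : ℕ) < N := by
    by_contra h
    have : i0 = Fin.last N := by
      apply Fin.ext; simp; omega
    rw [this] at hi0le; linarith
  refine ⟨⟨i0, hi0lt⟩, ?_, ?_⟩
  · simpa [Fin.castSucc] using hi0le
  · by_contra h
    push_neg at h
    have hmem : (⟨(i0:ℕ)+1, by omega⟩ : Fin (N+1)) ∈ s := by simp [hs]; exact h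
    have h2 := s.le_max' _ hmem
    have : ((i0:ℕ)+1) ≤ (i0:ℕ) := h2
    omega

lemma int_cast_le_of_real_lt {z : ℤ} {c : ℕ} (h : (c:ℝ) < z) : (c:ℤ) + 1 ≤ z := by
  have : (c:ℤ) < z := by exact_mod_cast h
  omega

lemma two_zpow_pos (e : ℤ) : (0:ℝ) < (2:ℝ)^e := by positivity

lemma two_zpow_ne (e : ℤ) : (2:ℝ)^e ≠ 0 := ne_of_gt (two_zpow_pos e)

lemma cast_pow_mul_zpow_neg (e : ℕ) : ((2:ℤ)^e : ℝ) * (2:ℝ)^(-(e:ℤ)) = 1 := by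
  push_cast
  rw [← zpow_natCast (2:ℝ) e, ← zpow_add₀ (by norm_num : (2:ℝ) ≠ 0)]
  simp

lemma cast_pow_mul_zpow_half {dd : ℕ} (h : 1 ≤ dd) :
    ((2:ℤ)^(dd-1) : ℝ) * (2:ℝ)^(-(dd:ℤ)) = 1/2 := by
  push_cast
  rw [← zpow_natCast (2:ℝ) (dd-1), ← zpow_add₀ (by norm_num : (2:ℝ) ≠ 0)]
  have he : ((dd-1:ℕ):ℤ) + (-(dd:ℤ)) = -1 := by omega
  rw [he]
  norm_num

lemma two_mul_zpow_neg {dd : ℕ} (h : 1 ≤ dd) :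
    (2:ℝ) * (2:ℝ)^(-(dd:ℤ)) = (2:ℝ)^(-((dd-1:ℕ):ℤ)) := by
  have he : -((dd-1:ℕ):ℤ) = 1 + -(dd:ℤ) := by omega
  rw [he, zpow_add₀ (by norm_num : (2:ℝ) ≠ 0)]
  norm_num

lemma tree_exists (l : ℕ) : 1 ≤ l → ∀ h : ℝ → ℝ, h 0 = 0 → h l = 1 →
    (∀ c : ℕ, c < l → ∃ d : ℕ,
      (∀ x ∈ Set.Icc (c:ℝ) ((c:ℝ)+1), h x = h c + (2:ℝ)^(-(d:ℤ)) * (x - c)) ∧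
      ∃ s : ℤ, h c = (s:ℝ) * (2:ℝ)^(-(d:ℤ))) →
    ∃ t : BinTree, t.leaves = l ∧ ∀ x ∈ Set.Icc (0:ℝ) (l:ℝ), treeMap t x = h x := by
  induction l using Nat.strong_induction_on with
  | _ l IH =>
  intro hl h h0 h1 hyp
  classical
  choose d hlin hstd using hyp
  have hstep : ∀ (c : ℕ) (hc : c < l), h ((c:ℝ)+1) = h c + (2:ℝ)^(-(d c hc : ℤ)) := by
    intro c hc
    have := hlin c hc ((c:ℝ)+1) ⟨by linarith, le_refl _⟩
    rw [this]; ring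
  have hpos : ∀ (c : ℕ) (hc : c < l), (0:ℝ) < (2:ℝ)^(-(d c hc : ℤ)) := fun c hc => two_zpow_pos _
  have hmono : ∀ c₂ : ℕ, c₂ ≤ l → ∀ c₁ : ℕ, c₁ ≤ c₂ → h c₁ ≤ h c₂ := by
    intro c₂
    induction c₂ with
    | zero => intro _ c₁ hc₁; interval_cases c₁; exact le_refl _
    | succ c ih =>
      intro hcl c₁ hc₁
      rcases Nat.lt_succ_iff_lt_or_eq.mp (Nat.lt_succ_of_le hc₁) with hlt | heq
      · have hcl' : c < l := by omega
        have hle : h c₁ ≤ h c := ih (by omega) c₁ (by omega)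
        have h2 := hstep c hcl'
        have h3 := hpos c hcl'
        have h4 : h c₁ ≤ h ((c:ℝ)+1) := by linarith
        have h5 : ((c+1:ℕ):ℝ) = (c:ℝ)+1 := by push_cast; ring
        rw [h5]; exact h4
      · subst heq; exact le_refl _
  rcases eq_or_lt_of_le hl with hl1 | hl2
  -- case l = 1
  · refine ⟨.leaf, by simp [BinTree.leaves, ← hl1], ?_⟩
    intro x hx
    have hc0 : (0:ℕ) < l := by omega
    have hlR : ((l:ℕ):ℝ) = 1 := by rw [← hl1]; norm_num
    have hxm : x ∈ Set.Icc ((0:ℕ):ℝ) (((0:ℕ):ℝ)+1) := by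
      simp only [Nat.cast_zero, zero_add]
      refine ⟨hx.1, ?_⟩
      have := hx.2; rw [hlR] at this; linarith
    have hx1 := hlin 0 hc0 x hxm
    have hx2 := hlin 0 hc0 1 (by norm_num)
    push_cast at hx1 hx2
    rw [h0] at hx1 hx2
    have h1' : h 1 = 1 := by have hh := h1; rw [hlR] at hh; exact hh
    rw [h1'] at hx2
    have he : (2:ℝ)^(-(d 0 hc0:ℤ)) = 1 := by nlinarith [hx2]
    simp only [treeMap]
    rw [hx1, he]
    ring
  -- case l ≥ 2
  · have hd1 : ∀ (c : ℕ) (hc : c < l), 1 ≤ d c hc := by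
      intro c hc
      by_contra hd0'
      have hd0 : d c hc = 0 := by omega
      have hstep' : h ((c:ℝ)+1) = h c + 1 := by
        have := hstep c hc; rw [hd0] at this; norm_num at this; exact this
      have hup : h ((c:ℝ)+1) ≤ 1 := by
        have := hmono l (le_refl l) (c+1) hc
        rw [h1] at this; push_cast at this; exact this
      have hc0' : (0:ℝ) ≤ h c := by
        have := hmono c (le_of_lt hc) 0 (Nat.zero_le c)
        push_cast at this; rw [h0] at this; exact this
      have hceq : h (c:ℝ) = 0 := by linarith
      have hc0 : c = 0 := by
        by_contra hne
        have hc0l : 0 < l := by omega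
        have h1c := hmono c (le_of_lt hc) 1 (by omega)
        have hs0 := hstep 0 hc0l
        have hp0 := hpos 0 hc0l
        simp only [Nat.cast_zero, Nat.cast_one, zero_add] at h1c hs0
        rw [h0, zero_add] at hs0
        rw [hs0] at h1c
        linarith
      subst hc0
      have h1lt : (1:ℕ) < l := hl2
      have hs1 := hstep 1 h1lt
      have hp1 := hpos 1 h1lt
      have h2up := hmono l (le_refl l) 2 h1lt
      rw [h1] at h2up
      simp only [Nat.cast_one, Nat.cast_ofNat, Nat.cast_zero, zero_add] at hs1 h2up hstep'
      rw [show (1:ℝ)+1 = 2 by norm_num] at hs1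
      linarith [h0]
    -- find the split point
    have hP0 : h ((0:ℕ):ℝ) ≤ 1/2 := by norm_num [h0]
    have hPc₀ := Nat.findGreatest_spec (P := fun c => h (c:ℝ) ≤ 1/2) (Nat.zero_le l) hP0
    set c₀ := Nat.findGreatest (fun c => h (c:ℝ) ≤ 1/2) l with hc₀
    have hc₀le : c₀ ≤ l := Nat.findGreatest_le l
    have hc₀lt : c₀ < l := by
      rcases eq_or_lt_of_le hc₀le with he | hlt
      · exfalso; rw [he, h1] at hPc₀; linarith
      · exact hlt
    have hnot : ¬ h ((c₀+1:ℕ):ℝ) ≤ 1/2 := by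
      have := Nat.findGreatest_is_greatest (P := fun c => h (c:ℝ) ≤ 1/2) (n := l)
        (k := c₀+1) (by omega) (by omega)
      simpa using this
    push_neg at hnot
    obtain ⟨s, hs⟩ := hstd c₀ hc₀lt
    have hD1 : 1 ≤ d c₀ hc₀lt := hd1 c₀ hc₀lt
    set D := d c₀ hc₀lt with hD
    have hsplit : h c₀ = 1/2 := by
      by_contra hne
      have hlt' : h c₀ < 1/2 := lt_of_le_of_ne hPc₀ hne
      have hhalf := cast_pow_mul_zpow_half hD1
      have hp := two_zpow_pos (-(D:ℤ))
      have hslt : (s:ℝ) < ((2:ℤ)^(D-1) : ℝ) := by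
        by_contra hge
        push_neg at hge
        have : ((2:ℤ)^(D-1):ℝ) * (2:ℝ)^(-(D:ℤ)) ≤ (s:ℝ) * (2:ℝ)^(-(D:ℤ)) :=
          mul_le_mul_of_nonneg_right hge (le_of_lt hp)
        rw [hhalf, ← hs] at this
        linarith
      have hsle : (s:ℤ) + 1 ≤ (2:ℤ)^(D-1) := Int.add_one_le_iff.mpr (by exact_mod_cast hslt)
      have hstep' := hstep c₀ hc₀lt
      rw [← hD] at hstep'
      have heq2 : h ((c₀:ℝ)+1) = ((s:ℝ)+1) * (2:ℝ)^(-(D:ℤ)) := by rw [hstep', hs]; ring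
      have hle2 : ((s:ℝ)+1) * (2:ℝ)^(-(D:ℤ)) ≤ 1/2 := by
        rw [← hhalf]
        have hcast : ((s:ℝ)+1) ≤ ((2:ℤ)^(D-1):ℝ) := by exact_mod_cast hsle
        exact mul_le_mul_of_nonneg_right hcast (le_of_lt hp)
      have hcast2 : ((c₀+1:ℕ):ℝ) = (c₀:ℝ)+1 := by push_cast; ring
      rw [hcast2, heq2] at hnot
      linarith
    have hc₀1 : 1 ≤ c₀ := by
      by_contra hne
      have hz : c₀ = 0 := by omega
      rw [hz] at hsplit
      norm_num [h0] at hsplit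
    -- left function
    set hL : ℝ → ℝ := fun x => 2 * h x with hLdef
    have hLhyp : ∀ c : ℕ, c < c₀ → ∃ d' : ℕ,
        (∀ x ∈ Set.Icc (c:ℝ) ((c:ℝ)+1), hL x = hL c + (2:ℝ)^(-(d':ℤ)) * (x - c)) ∧
        ∃ s' : ℤ, hL c = (s':ℝ) * (2:ℝ)^(-(d':ℤ)) := by
      intro c hc
      have hcl : c < l := by omega
      have hpow := two_mul_zpow_neg (hd1 c hcl)
      refine ⟨d c hcl - 1, ?_, ?_⟩
      · intro x hx
        have := hlin c hcl x hx
        show 2 * h x = 2 * h c + _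
        rw [this, ← hpow]
        ring
      · obtain ⟨s', hs'⟩ := hstd c hcl
        refine ⟨s', ?_⟩
        show 2 * h (c:ℝ) = _
        rw [hs', ← hpow]
        ring
    obtain ⟨tL, htLl, htL⟩ := IH c₀ hc₀lt hc₀1 hL (by show 2 * h 0 = 0; rw [h0]; ring)
      (by show 2 * h (c₀:ℝ) = 1; rw [hsplit]; norm_num) hLhyp
    -- right function
    set hR : ℝ → ℝ := fun x => 2 * h (x + c₀) - 1 with hRdef
    have hRl : l - c₀ < l := by omega
    have hRhyp : ∀ c : ℕ, c < l - c₀ → ∃ d' : ℕ,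
        (∀ x ∈ Set.Icc (c:ℝ) ((c:ℝ)+1), hR x = hR c + (2:ℝ)^(-(d':ℤ)) * (x - c)) ∧
        ∃ s' : ℤ, hR c = (s':ℝ) * (2:ℝ)^(-(d':ℤ)) := by
      intro c hc
      have hcl : c + c₀ < l := by omega
      have hcast : ((c + c₀ : ℕ):ℝ) = (c:ℝ) + (c₀:ℝ) := by push_cast; ring
      have hpow := two_mul_zpow_neg (hd1 (c+c₀) hcl)
      have hcancel := cast_pow_mul_zpow_neg (d (c+c₀) hcl - 1)
      refine ⟨d (c+c₀) hcl - 1, ?_, ?_⟩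
      · intro x hx
        have hx' : x + c₀ ∈ Set.Icc ((c+c₀:ℕ):ℝ) (((c+c₀:ℕ):ℝ)+1) := by
          rw [hcast]
          exact ⟨by linarith [hx.1], by linarith [hx.2]⟩
        have := hlin (c+c₀) hcl (x + c₀) hx'
        show 2 * h (x + c₀) - 1 = (2 * h ((c:ℝ) + c₀) - 1) + _
        rw [this, hcast, ← hpow]
        ring
      · obtain ⟨s', hs'⟩ := hstd (c+c₀) hcl
        refine ⟨s' - 2^(d (c+c₀) hcl - 1), ?_⟩
        show 2 * h ((c:ℝ) + c₀) - 1 = _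
        rw [show (c:ℝ) + (c₀:ℝ) = ((c+c₀:ℕ):ℝ) by push_cast; ring, hs']
        push_cast [← hpow] at hcancel ⊢
        linear_combination hcancel
    obtain ⟨tR, htRl, htR⟩ := IH (l - c₀) hRl (by omega) hR
      (by show 2 * h ((0:ℝ) + c₀) - 1 = 0
          rw [show (0:ℝ) + (c₀:ℝ) = ((c₀:ℕ):ℝ) by ring, hsplit]; norm_num)
      (by show 2 * h (((l - c₀:ℕ):ℝ) + c₀) - 1 = 1
          rw [show ((l - c₀:ℕ):ℝ) + (c₀:ℝ) = ((l:ℕ):ℝ) by push_cast [Nat.cast_sub hc₀le]; ring, h1]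
          norm_num) hRhyp
    -- assemble
    refine ⟨.node tL tR, by simp only [BinTree.leaves, htLl, htRl]; omega, ?_⟩
    intro x hx
    simp only [treeMap, htLl]
    by_cases hxc : x ≤ (c₀:ℝ)
    · rw [if_pos hxc]
      have := htL x ⟨hx.1, hxc⟩
      rw [this]
      show (2 * h x) / 2 = h x
      ring
    · rw [if_neg hxc]
      push_neg at hxc
      have hx' : x - c₀ ∈ Set.Icc (0:ℝ) ((l - c₀:ℕ):ℝ) := by
        rw [Nat.cast_sub hc₀le]
        exact ⟨by linarith, by linarith [hx.2]⟩
      have := htR (x - c₀) hx'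
      rw [this]
      show (2 * h (x - c₀ + c₀) - 1) / 2 + 1/2 = h x
      rw [show x - (c₀:ℝ) + (c₀:ℝ) = x by ring]
      ring

lemma forest_exists : ∀ (n : ℕ) (g : ℝ → ℝ) (b : ℕ → ℕ), b 0 = 0 →
    (∀ j, j < n → b j < b (j+1)) →
    (∀ j, j ≤ n → g ((b j : ℕ):ℝ) = j) →
    (∀ j, j < n → ∀ c : ℕ, b j ≤ c → c < b (j+1) → ∃ d : ℕ,
      (∀ x ∈ Set.Icc (c:ℝ) ((c:ℝ)+1), g x = g c + (2:ℝ)^(-(d:ℤ)) * (x - c)) ∧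
      ∃ s : ℤ, g c = (j:ℝ) + (s:ℝ) * (2:ℝ)^(-(d:ℤ))) →
    ∃ T : List BinTree, T.length = n ∧ (T.map BinTree.leaves).sum = b n ∧
      ∀ x ∈ Set.Icc (0:ℝ) ((b n : ℕ):ℝ), forestMap T x = g x := by
  intro n
  induction n with
  | zero =>
    intro g b hb0 _ hval _
    refine ⟨[], rfl, by simp [hb0], ?_⟩
    intro x hx
    rw [hb0] at hx
    norm_num at hx
    have := hval 0 (le_refl 0)
    rw [hb0] at this
    norm_num at this
    rw [hx]
    simp only [forestMap]
    exact this.symm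
  | succ n ih =>
    intro g b hb0 hmono hval hblk
    -- b is monotone: b 1 ≤ b (j+1) for j ≤ n
    have hb1le : ∀ j, j ≤ n → b 1 ≤ b (j+1) := by
      intro j hj
      induction j with
      | zero => exact le_refl _
      | succ j ihj =>
        have := hmono (j+1) (by omega)
        have := ihj (by omega)
        omega
    have hb1pos : 1 ≤ b 1 := by
      have h01 := hmono 0 (by omega)
      simp only [zero_add] at h01
      omega
    -- tree for the first block
    have htree := tree_exists (b 1) hb1pos g
      (by have := hval 0 (by omega); rw [hb0] at this; norm_num at this ⊢; exact this)
      (by have := hval 1 (by omega); norm_num at this ⊢; exact this)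
      (by
        intro c hc
        obtain ⟨d, hlin, s, hstd⟩ := hblk 0 (by omega) c (by omega) hc
        exact ⟨d, hlin, s, by rw [hstd]; norm_num⟩)
    obtain ⟨t, htl, ht⟩ := htree
    -- recursion
    set g' : ℝ → ℝ := fun x => g (x + (b 1 : ℕ)) - 1 with hg'
    set b' : ℕ → ℕ := fun j => b (j+1) - b 1 with hb'
    have hcast : ∀ j, j ≤ n → ((b' j : ℕ):ℝ) = ((b (j+1) : ℕ):ℝ) - ((b 1 : ℕ):ℝ) := by
      intro j hj
      rw [hb']
      simp only
      rw [Nat.cast_sub (hb1le j hj)]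
    obtain ⟨T', hTl, hTs, hT⟩ := ih g' b' (by rw [hb']; simp)
      (by
        intro j hj
        rw [hb']
        simp only
        have h1 := hmono (j+1) (by omega)
        have h2 := hb1le j (by omega)
        omega)
      (by
        intro j hj
        rw [hg']
        simp only
        rw [hcast j hj]
        rw [show ((b (j+1):ℕ):ℝ) - ((b 1:ℕ):ℝ) + ((b 1:ℕ):ℝ) = ((b (j+1):ℕ):ℝ) by ring]
        rw [hval (j+1) (by omega)]
        push_cast
        ring)
      (by
        intro j hj c hc1 hc2
        have hC1 : b (j+1) ≤ c + b 1 := by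
          rw [hb'] at hc1
          simp only at hc1
          omega
        have hC2 : c + b 1 < b (j+1+1) := by
          rw [hb'] at hc2
          simp only at hc2
          have := hb1le (j+1) (by omega)
          omega
        obtain ⟨d, hlin, s, hstd⟩ := hblk (j+1) (by omega) (c + b 1) hC1 hC2
        have hcc : ((c + b 1:ℕ):ℝ) = (c:ℝ) + ((b 1:ℕ):ℝ) := by push_cast; ring
        refine ⟨d, ?_, ⟨s, ?_⟩⟩
        · intro x hx
          have hx' : x + (b 1:ℕ) ∈ Set.Icc ((c + b 1:ℕ):ℝ) (((c + b 1:ℕ):ℝ)+1) := by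
            rw [hcc]
            exact ⟨by linarith [hx.1], by linarith [hx.2]⟩
          have := hlin (x + (b 1:ℕ)) hx'
          rw [hg']
          simp only
          rw [this, hcc]
          ring
        · rw [hg']
          simp only
          rw [show (c:ℝ) + ((b 1:ℕ):ℝ) = ((c + b 1:ℕ):ℝ) by push_cast; ring, hstd]
          push_cast
          ring)
    -- assemble
    refine ⟨t :: T', by simp [hTl], ?_, ?_⟩
    · simp only [List.map_cons, List.sum_cons, hTs, htl, hb']
      have := hb1le n (le_refl n)
      omega
    · intro x hx
      simp only [forestMap, htl]
      by_cases hxc : x ≤ ((b 1:ℕ):ℝ)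
      · rw [if_pos hxc]
        exact ht x ⟨hx.1, hxc⟩
      · rw [if_neg hxc]
        push_neg at hxc
        have hx' : x - (b 1:ℕ) ∈ Set.Icc (0:ℝ) ((b' n:ℕ):ℝ) := by
          rw [hcast n (le_refl n)]
          exact ⟨by linarith, by linarith [hx.2]⟩
        have := hT (x - (b 1:ℕ)) hx'
        rw [this, hg']
        simp only
        rw [show x - ((b 1:ℕ):ℝ) + ((b 1:ℕ):ℝ) = x by ring]
        ring

lemma dyadicPL_of_blocks (p n : ℕ) (F g : ℝ → ℝ)
    (heq : ∀ x ∈ Set.Icc (0:ℝ) (p:ℝ), F x = g x)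
    (hbij : Set.BijOn g (Set.Icc 0 (p:ℝ)) (Set.Icc 0 (n:ℝ)))
    (hdy : ∀ c : ℕ, c ≤ p → IsDyadic (g c))
    (hlin : ∀ c : ℕ, c < p → ∃ k : ℤ, ∀ x ∈ Set.Icc (c:ℝ) ((c:ℝ)+1),
      g x = g c + (2:ℝ)^k * (x - c)) :
    DyadicPL p n F := by
  constructor
  · exact hbij.congr (fun x hx => (heq x hx).symm)
  · refine ⟨p, fun i => (i.1 : ℝ), ?_, by norm_num, by simp [Fin.last], ?_, ?_⟩
    · intro i j hij
      show ((i.1:ℕ):ℝ) < ((j.1:ℕ):ℝ)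
      exact_mod_cast (Fin.lt_iff_val_lt_val.mp hij)
    · intro i
      have hip : (i.1 : ℕ) ≤ p := by omega
      have hmem : ((i.1:ℕ):ℝ) ∈ Set.Icc (0:ℝ) (p:ℝ) := by
        constructor
        · positivity
        · exact_mod_cast hip
      constructor
      · exact ⟨i.1, 0, by norm_num⟩
      · rw [heq _ hmem]
        exact hdy i.1 hip
    · intro i
      obtain ⟨k, hk⟩ := hlin i.1 i.isLt
      refine ⟨k, ?_⟩
      intro x hx
      simp only at hx ⊢
      have hcs : ((i.castSucc : Fin (p+1)).1 : ℝ) = (i.1 : ℝ) := by norm_num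
      have hsc : ((i.succ : Fin (p+1)).1 : ℝ) = (i.1 : ℝ) + 1 := by
        simp [Fin.val_succ]
      rw [hcs, hsc] at hx
      have hx1 : x ∈ Set.Icc ((i.1:ℕ):ℝ) (((i.1:ℕ):ℝ)+1) := hx
      have hxmem : x ∈ Set.Icc (0:ℝ) (p:ℝ) := by
        constructor
        · have : (0:ℝ) ≤ (i.1:ℝ) := by positivity
          linarith [hx1.1]
        · have : ((i.1:ℕ):ℝ) + 1 ≤ (p:ℝ) := by exact_mod_cast i.isLt
          linarith [hx1.2]
      have himem : ((i.1:ℕ):ℝ) ∈ Set.Icc (0:ℝ) (p:ℝ) := by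
        constructor
        · positivity
        · have : (i.1:ℕ) ≤ p := by omega
          exact_mod_cast this
      rw [hcs, heq x hxmem, heq _ himem]
      exact hk x hx1

lemma strictMonoOn_pl (m n : ℕ) (f : ℝ → ℝ) (hf : DyadicPL m n f) :
    StrictMonoOn f (Set.Icc (0:ℝ) (m:ℝ)) := by
  obtain ⟨hbij, N, pts, hm, hp0, hpl, hdy, hlin⟩ := hf
  rw [← hp0, ← hpl]
  -- strict mono on each piece
  have hpiece : ∀ i : Fin N, StrictMonoOn f (Set.Icc (pts i.castSucc) (pts i.succ)) := by
    intro i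
    obtain ⟨k, hk⟩ := hlin i
    intro x hx y hy hxy
    rw [hk x hx, hk y hy]
    have := two_zpow_pos k
    nlinarith
  have key : ∀ j (hj : j ≤ N), StrictMonoOn f (Set.Icc (pts 0) (pts ⟨j, by omega⟩)) := by
    intro j
    induction j with
    | zero =>
      intro hj x hx y hy hxy
      exfalso
      have h1 : pts (⟨0, by omega⟩ : Fin (N+1)) = pts 0 := by congr
      rw [h1] at hx hy
      have : x = y := le_antisymm (hx.2.trans hy.1) (hy.2.trans hx.1)
      exact absurd this (ne_of_lt hxy)
    | succ j ihj =>
      intro hj x hx y hy hxy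
      have hjN : j < N := by omega
      have hq : pts (⟨j, by omega⟩ : Fin (N+1)) = pts (Fin.castSucc ⟨j, hjN⟩) := by congr
      have hq2 : pts (⟨j+1, by omega⟩ : Fin (N+1)) = pts (Fin.succ ⟨j, hjN⟩) := by congr
      set q := pts (⟨j, by omega⟩ : Fin (N+1)) with hqdef
      have hq0 : pts 0 ≤ q := by
        rcases Nat.eq_zero_or_pos j with h | h
        · subst h; rw [hqdef]; exact le_of_eq (by congr)
        · exact le_of_lt (hm (by rw [Fin.lt_iff_val_lt_val]; simpa using h))
      by_cases hyq : y ≤ q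
      · exact ihj (by omega) ⟨hx.1, le_trans (le_of_lt hxy) hyq⟩ ⟨hy.1, hyq⟩ hxy
      · push_neg at hyq
        by_cases hxq : q ≤ x
        · refine hpiece ⟨j, hjN⟩ ⟨?_, ?_⟩ ⟨?_, ?_⟩ hxy
          · rw [← hq]; exact hxq
          · rw [← hq2]; exact le_trans (le_of_lt hxy) hy.2
          · rw [← hq]; exact le_trans hxq (le_of_lt hxy)
          · rw [← hq2]; exact hy.2
        · push_neg at hxq
          have h1 : f x < f q := ihj (by omega) ⟨hx.1, le_of_lt hxq⟩ ⟨hq0, le_refl _⟩ hxq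
          have h2 : f q ≤ f y := by
            rcases eq_or_lt_of_le (le_of_lt hyq) with he | hlt
            · rw [he]
            · exact le_of_lt (hpiece ⟨j, hjN⟩ ⟨le_of_eq hq.symm, by rw [← hq2]; exact le_trans (le_of_lt hlt) hy.2⟩
                ⟨by rw [← hq]; exact le_of_lt hyq, by rw [← hq2]; exact hy.2⟩ hlt)
          linarith
  have := key N (le_refl N)
  have hlast : (⟨N, by omega⟩ : Fin (N+1)) = Fin.last N := rfl
  rw [hlast] at this
  exact this

lemma zpow_mul_pow_eq {k : ℤ} {D N : ℕ} (h : (D:ℤ) = (N:ℤ) - k) :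
    (2:ℝ)^k * 2^D = 2^N := by
  rw [← zpow_natCast (2:ℝ) D, ← zpow_natCast (2:ℝ) N, ← zpow_add₀ (by norm_num : (2:ℝ) ≠ 0)]
  congr 1
  omega

lemma div_pow_eq (a : ℤ) (e N : ℕ) (he : e ≤ N) :
    (a:ℝ)/2^e = ((a * 2^(N-e) : ℤ):ℝ)/2^N := by
  have h2 : (2:ℝ)^(N-e) * 2^e = 2^N := by rw [← pow_add]; congr 1; omega
  push_cast
  rw [div_eq_div_iff (by positivity) (by positivity), mul_assoc, h2]

lemma main_aux (m n : ℕ) (f : ℝ → ℝ) (hf : DyadicPL m n f) :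
    ∃ (N : ℕ) (b : ℕ → ℕ),
      b 0 = 0 ∧ b n = m * 2^N ∧ (∀ j, j < n → b j < b (j+1)) ∧
      (∀ j, j ≤ n → f (((b j : ℕ):ℝ) / 2^N) = j) ∧
      (∀ c : ℕ, c < m * 2^N → ∃ (d : ℕ) (w : ℤ),
        (∀ x ∈ Set.Icc (c:ℝ) ((c:ℝ)+1),
          f (x / 2^N) = f ((c:ℝ) / 2^N) + (2:ℝ)^(-(d:ℤ)) * (x - c)) ∧
        f ((c:ℝ)/2^N) = (w:ℝ) / 2^d) := by
  classical
  have hsm := strictMonoOn_pl m n f hf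
  obtain ⟨hbij, N', pts, hm, hp0, hpl, hdy, hlin⟩ := hf
  have hmem0 : (0:ℝ) ∈ Set.Icc (0:ℝ) (m:ℝ) := ⟨le_refl _, by positivity⟩
  have hmemm : (m:ℝ) ∈ Set.Icc (0:ℝ) (m:ℝ) := ⟨by positivity, le_refl _⟩
  have hf0 : f 0 = 0 := by
    obtain ⟨x, hx, hfx⟩ := hbij.surjOn ⟨le_refl _, by positivity⟩
    rcases eq_or_lt_of_le hx.1 with he | hlt
    · rw [← he] at hfx; exact hfx.symm ▸ hfx
    · exfalso
      have h1 : f 0 < f x := hsm hmem0 hx hlt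
      have h2 : (0:ℝ) ≤ f 0 := (hbij.mapsTo hmem0).1
      rw [hfx] at h1
      linarith
  have hfm : f m = n := by
    obtain ⟨x, hx, hfx⟩ := hbij.surjOn (⟨by positivity, le_refl _⟩ : (n:ℝ) ∈ Set.Icc 0 (n:ℝ))
    rcases eq_or_lt_of_le hx.2 with he | hlt
    · rw [he] at hfx; exact hfx
    · exfalso
      have h1 : f x < f m := hsm hx hmemm hlt
      have h2 : f m ≤ (n:ℝ) := (hbij.mapsTo hmemm).2
      rw [hfx] at h1
      linarith
  -- choose exponents
  have hdy1 : ∀ i, IsDyadic (pts i) := fun i => (hdy i).1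
  have hdy2 : ∀ i, IsDyadic (f (pts i)) := fun i => (hdy i).2
  choose a e hae using hdy1
  choose a' e' hae' using hdy2
  choose k hk using hlin
  set N0 : ℕ := (Finset.univ.sup e) ⊔ (Finset.univ.sup e') with hN0
  set K : ℕ := Finset.univ.sup (fun i => (k i).toNat) with hK
  set N : ℕ := N0 + K with hN
  have heN : ∀ i, e i ≤ N := by
    intro i
    have := Finset.le_sup (f := e) (Finset.mem_univ i)
    omega
  have heN0' : ∀ i, e' i ≤ N0 := by
    intro i
    have := Finset.le_sup (f := e') (Finset.mem_univ i)
    omega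
  have hkN : ∀ i : Fin N', k i ≤ (N:ℤ) - N0 := by
    intro i
    have h1 : (k i).toNat ≤ K := Finset.le_sup (f := fun i => (k i).toNat) (Finset.mem_univ i)
    have h2 := Int.self_le_toNat (k i)
    have h3 : ((k i).toNat:ℤ) ≤ (K:ℤ) := by exact_mod_cast h1
    omega
  have h2N : (0:ℝ) < 2^N := by positivity
  -- grid descriptions
  have hgridp : ∀ i, ∃ z : ℤ, pts i = (z:ℝ) / 2^N := by
    intro i
    exact ⟨a i * 2^(N - e i), by rw [hae i, div_pow_eq (a i) (e i) N (heN i)]⟩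
  have hgridf : ∀ i, ∃ z : ℤ, f (pts i) = (z:ℝ) / 2^N0 := by
    intro i
    exact ⟨a' i * 2^(N0 - e' i), by rw [hae' i, div_pow_eq (a' i) (e' i) N0 (heN0' i)]⟩
  choose zp hzp using hgridp
  choose zf hzf using hgridf
  -- the key per-interval lemma
  have hkey : ∀ (c : ℕ), c < m * 2^N → ∃ (d : ℕ) (w : ℤ),
      (∀ x ∈ Set.Icc (c:ℝ) ((c:ℝ)+1),
        f (x / 2^N) = f ((c:ℝ) / 2^N) + (2:ℝ)^(-(d:ℤ)) * (x - c)) ∧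
      f ((c:ℝ)/2^N) = (w:ℝ) / 2^d := by
    intro c hc
    have hc0 : (0:ℝ) ≤ (c:ℝ)/2^N := by positivity
    have hcm : (c:ℝ)/2^N < m := by
      rw [div_lt_iff₀ h2N]
      exact_mod_cast hc
    obtain ⟨i, hi1, hi2⟩ := exists_piece pts hm (x := (c:ℝ)/2^N)
      (by rw [hp0]; exact hc0) (by rw [hpl]; exact hcm)
    have hzc : (c:ℤ) + 1 ≤ zp i.succ := by
      have hlt : (c:ℝ)/2^N < (zp i.succ : ℝ)/2^N := by rw [← hzp i.succ]; exact hi2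
      have hclt : (c:ℝ) < (zp i.succ:ℝ) := by
        have h2 := mul_lt_mul_of_pos_right hlt h2N
        rwa [div_mul_cancel₀ _ (ne_of_gt h2N), div_mul_cancel₀ _ (ne_of_gt h2N)] at h2
      have : (c:ℤ) < zp i.succ := by exact_mod_cast hclt
      omega
    have hsub : ∀ x ∈ Set.Icc (c:ℝ) ((c:ℝ)+1), x/2^N ∈ Set.Icc (pts i.castSucc) (pts i.succ) := by
      intro x hx
      constructor
      · refine le_trans hi1 ?_
        gcongr
        exact hx.1
      · rw [hzp i.succ]
        have h1 : ((c:ℝ)+1) ≤ (zp i.succ:ℝ) := by exact_mod_cast hzc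
        have h2 : x ≤ (zp i.succ:ℝ) := le_trans hx.2 h1
        rw [div_le_div_iff₀ h2N h2N]
        exact mul_le_mul_of_nonneg_right h2 (le_of_lt h2N)
    set D : ℕ := ((N:ℤ) - k i).toNat with hD
    have hkNi := hkN i
    have hDk : (D:ℤ) = (N:ℤ) - k i := Int.toNat_of_nonneg (by omega)
    have hN0D : N0 ≤ D := by omega
    have hpows := zpow_mul_pow_eq hDk
    have h2D : (0:ℝ) < 2^D := by positivity
    have hslope : (2:ℝ)^(k i) / 2^N = (2:ℝ)^(-(D:ℤ)) := by
      rw [zpow_neg, zpow_natCast, div_eq_iff (ne_of_gt h2N), inv_mul_eq_div,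
        eq_div_iff (ne_of_gt h2D)]
      exact hpows
    have hcmem : (c:ℝ) ∈ Set.Icc (c:ℝ) ((c:ℝ)+1) := ⟨le_refl _, by linarith⟩
    have hfc := hk i ((c:ℝ)/2^N) (hsub _ hcmem)
    refine ⟨D, zf i.castSucc * 2^(D - N0) + (c - zp i.castSucc), ?_, ?_⟩
    · intro x hx
      have hfx := hk i (x/2^N) (hsub x hx)
      rw [hfx, hfc]
      rw [show x/2^N - pts i.castSucc = (c:ℝ)/2^N - pts i.castSucc + (x - c)/2^N by ring]
      rw [mul_add, ← hslope]
      ring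
    · have hsplit : (2:ℝ)^(D - N0) * 2^N0 = 2^D := by rw [← pow_add]; congr 1; omega
      have hzfB : f (pts i.castSucc) * 2^D = (zf i.castSucc : ℝ) * 2^(D - N0) := by
        rw [hzf i.castSucc]
        field_simp
        linear_combination (-(zf i.castSucc : ℝ)) * hsplit
      have hzpC : pts i.castSucc * 2^N = (zp i.castSucc : ℝ) := by
        rw [hzp i.castSucc]; field_simp
      have hdivC : (c:ℝ)/2^N * 2^N = (c:ℝ) := div_mul_cancel₀ _ (ne_of_gt h2N)
      rw [eq_div_iff (ne_of_gt h2D)]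
      push_cast
      linear_combination (2:ℝ)^D * hfc + ((c:ℝ)/2^N - pts i.castSucc) * hpows + hdivC - hzpC + hzfB
  -- block endpoints
  have hxj : ∀ j : ℕ, ∃ z : ℕ, j ≤ n → ((z:ℝ)/2^N ∈ Set.Icc (0:ℝ) (m:ℝ) ∧ f ((z:ℝ)/2^N) = j) := by
    intro j
    by_cases hj : j ≤ n
    swap
    · exact ⟨0, fun h => absurd h hj⟩
    obtain ⟨x, hx, hfx⟩ := hbij.surjOn (⟨by positivity, by exact_mod_cast hj⟩ : (j:ℝ) ∈ Set.Icc 0 (n:ℝ))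
    rcases eq_or_lt_of_le hx.2 with hxm | hxm
    · refine ⟨m * 2^N, fun _ => ?_⟩
      have hdiv : ((m * 2^N : ℕ):ℝ)/2^N = (m:ℝ) := by push_cast; field_simp
      rw [hdiv]
      exact ⟨hmemm, by rw [← hxm]; exact hfx⟩
    · obtain ⟨i, hi1, hi2⟩ := exists_piece pts hm (x := x)
        (by rw [hp0]; exact hx.1) (by rw [hpl]; exact hxm)
      have heqx := hk i x ⟨hi1, le_of_lt hi2⟩
      rw [hfx] at heqx
      -- (j:ℝ) = f pts + 2^k (x - pts)
      set D : ℕ := ((N:ℤ) - k i).toNat with hD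
      have hkNi := hkN i
      have hDk : (D:ℤ) = (N:ℤ) - k i := Int.toNat_of_nonneg (by omega)
      have hN0D : N0 ≤ D := by omega
      have hpows := zpow_mul_pow_eq hDk
      have h2D : (0:ℝ) < 2^D := by positivity
      have hsplit : (2:ℝ)^(D - N0) * 2^N0 = 2^D := by rw [← pow_add]; congr 1; omega
      set w : ℤ := zp i.castSucc + j * 2^D - zf i.castSucc * 2^(D - N0) with hw
      have hxw : x * 2^N = (w:ℝ) := by
        have hmul : ((j:ℝ) - f (pts i.castSucc)) * 2^D = 2^N * (x - pts i.castSucc) := by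
          rw [heqx]
          linear_combination (x - pts i.castSucc) * hpows
        have hzfB : f (pts i.castSucc) * 2^D = (zf i.castSucc : ℝ) * 2^(D - N0) := by
          rw [hzf i.castSucc]
          field_simp
          linear_combination (-(zf i.castSucc : ℝ)) * hsplit
        have hzpC : pts i.castSucc * 2^N = (zp i.castSucc : ℝ) := by
          rw [hzp i.castSucc]; field_simp
        rw [hw]
        push_cast
        linear_combination -hmul - hzfB + hzpC
      have hw0 : 0 ≤ w := by
        have h1 : (0:ℝ) ≤ x * 2^N := mul_nonneg hx.1 (le_of_lt h2N)
        rw [hxw] at h1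
        exact_mod_cast h1
      refine ⟨w.toNat, fun _ => ?_⟩
      have hcast : ((w.toNat:ℕ):ℝ) = (w:ℝ) := by
        have h := Int.toNat_of_nonneg hw0
        exact_mod_cast congrArg (fun z : ℤ => (z:ℝ)) h
      have hxdiv : ((w.toNat:ℕ):ℝ)/2^N = x := by
        rw [hcast, ← hxw]
        field_simp
      rw [hxdiv]
      exact ⟨hx, hfx⟩
  choose b hb using hxj
  have hval : ∀ j, j ≤ n → f (((b j : ℕ):ℝ) / 2^N) = j := fun j hj => ((hb j) hj).2
  have hbmem : ∀ j, j ≤ n → ((b j:ℝ))/2^N ∈ Set.Icc (0:ℝ) (m:ℝ) := fun j hj => ((hb j) hj).1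
  have hinj := hbij.injOn
  have hbmono : ∀ j, j < n → b j < b (j+1) := by
    intro j hj
    have h1 := hval j (by omega)
    have h2 := hval (j+1) (by omega)
    rcases lt_trichotomy (b j) (b (j+1)) with h | h | h
    · exact h
    · exfalso
      rw [h] at h1
      rw [h1] at h2
      have : (j:ℝ) = ((j+1:ℕ):ℝ) := h2.symm ▸ rfl
      push_cast at this
      linarith
    · exfalso
      have hlt : ((b (j+1):ℝ))/2^N < ((b j:ℝ))/2^N := by
        rw [div_lt_div_iff₀ h2N h2N]
        exact mul_lt_mul_of_pos_right (by exact_mod_cast h) h2N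
      have := hsm (hbmem (j+1) (by omega)) (hbmem j (by omega)) hlt
      rw [h1, h2] at this
      push_cast at this
      linarith
  have hb0 : b 0 = 0 := by
    have h1 := hval 0 (by omega)
    norm_num at h1
    have h2 : ((b 0:ℝ))/2^N = 0 := by
      apply hinj (hbmem 0 (by omega)) hmem0
      rw [h1, hf0]
    have : ((b 0:ℝ)) = 0 := by
      field_simp at h2
      exact_mod_cast h2
    exact_mod_cast this
  have hbn : b n = m * 2^N := by
    have h1 := hval n (le_refl n)
    have h2 : ((b n:ℝ))/2^N = (m:ℝ) := by
      apply hinj (hbmem n (le_refl n)) hmemm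
      rw [h1, hfm]
    have : ((b n:ℝ)) = (m:ℝ) * 2^N := by
      rw [div_eq_iff (ne_of_gt h2N)] at h2
      exact h2
    exact_mod_cast this
  exact ⟨N, b, hb0, hbn, hbmono, hval, hkey⟩

/-- The halving map `α : [0,2] → [0,1]` is a morphism `2 ⟶ 1` of the category of
piecewise-linear dyadic bijections and is invertible, making the object `1` (with
juxtaposition as tensor) an idempotent object; moreover every morphism `φ : m ⟶ n` of
this category factorizes as `φ = α_T ∘ α_S⁻¹` for some `p` and forests `S` (with `m`
roots and `p` leaves) and `T` (with `n` roots and `p` leaves). -/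
theorem dyadicPL_idempotent_and_factorization :
    DyadicPL 2 1 (fun x => x / 2) ∧
    (∃ g : ℝ → ℝ, DyadicPL 1 2 g ∧
      (∀ x ∈ Set.Icc (0 : ℝ) 2, g (x / 2) = x) ∧
      (∀ y ∈ Set.Icc (0 : ℝ) 1, g y / 2 = y)) ∧
    (∀ (m n : ℕ) (f : ℝ → ℝ), DyadicPL m n f →
      ∃ (p : ℕ) (S T : List BinTree),
        S.length = m ∧ (S.map BinTree.leaves).sum = p ∧
        T.length = n ∧ (T.map BinTree.leaves).sum = p ∧
        DyadicPL p m (forestMap S) ∧ DyadicPL p n (forestMap T) ∧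
        ∀ x ∈ Set.Icc (0 : ℝ) p, f (forestMap S x) = forestMap T x) := by
  refine ⟨?_, ?_, ?_⟩
  · -- halving map
    apply dyadicPL_of_blocks 2 1 _ (fun x => x / 2) (fun x _ => rfl)
    · constructor
      · intro x hx
        have h1 := hx.1
        have h2 := hx.2
        push_cast at h1 h2 ⊢
        exact ⟨by linarith, by linarith⟩
      constructor
      · intro x _ y _ h
        have h' : x / 2 = y / 2 := h
        linarith
      · intro y hy
        have h1 := hy.1
        have h2 := hy.2
        push_cast at h1 h2
        exact ⟨2*y, ⟨by push_cast; linarith, by push_cast; linarith⟩, by show 2*y/2 = y; ring⟩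
    · intro c _
      exact ⟨c, 1, by push_cast; ring⟩
    · intro c _
      refine ⟨-1, fun x hx => ?_⟩
      show x / 2 = (c:ℝ)/2 + (2:ℝ)^(-1:ℤ) * (x - (c:ℝ))
      rw [zpow_neg_one]
      ring
  · -- inverse of halving
    refine ⟨fun x => 2 * x, ?_, fun x _ => by ring, fun y _ => by ring⟩
    apply dyadicPL_of_blocks 1 2 _ (fun x => 2 * x) (fun x _ => rfl)
    · constructor
      · intro x hx
        have h1 := hx.1
        have h2 := hx.2
        push_cast at h1 h2 ⊢
        exact ⟨by linarith, by linarith⟩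
      constructor
      · intro x _ y _ h
        have h' : 2 * x = 2 * y := h
        linarith [h']
      · intro y hy
        have h1 := hy.1
        have h2 := hy.2
        push_cast at h1 h2
        exact ⟨y/2, ⟨by push_cast; linarith, by push_cast; linarith⟩, by show 2*(y/2) = y; ring⟩
    · intro c _
      exact ⟨2*c, 0, by push_cast; ring⟩
    · intro c _
      refine ⟨1, fun x hx => ?_⟩
      show 2 * x = 2 * (c:ℝ) + (2:ℝ)^(1:ℤ) * (x - (c:ℝ))
      norm_num
      ring
  · -- factorization
    intro m n f hf
    have hbijf := hf.1
    obtain ⟨N, b, hb0, hbn, hbmono, hval, hkey⟩ := main_aux m n f hf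
    have h2N : (0:ℝ) < 2^N := by positivity
    have h2Nn : (2:ℕ)^N > 0 := Nat.pow_pos (by norm_num)
    -- monotone chain for b
    have hble : ∀ j2, j2 ≤ n → ∀ j1, j1 ≤ j2 → b j1 ≤ b j2 := by
      intro j2
      induction j2 with
      | zero =>
        intro _ j1 h1
        have hz : j1 = 0 := by omega
        exact le_of_eq (congrArg b hz)
      | succ j2 ih =>
        intro h2 j1 h1
        rcases Nat.lt_succ_iff_lt_or_eq.mp (Nat.lt_succ_of_le h1) with h | h
        · exact le_trans (ih (by omega) j1 (by omega)) (le_of_lt (hbmono j2 (by omega)))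
        · rw [h]
    -- the forest S
    obtain ⟨S, hSl, hSs, hSeq⟩ := forest_exists m (fun x => x / 2^N) (fun j => j * 2^N)
      (by simp)
      (by intro j hj; nlinarith [h2Nn])
      (by
        intro j hj
        push_cast
        field_simp)
      (by
        intro j hj c hc1 hc2
        refine ⟨N, fun x hx => ?_, ⟨(c:ℤ) - j * 2^N, ?_⟩⟩
        · rw [zpow_neg, zpow_natCast]
          ring
        · rw [zpow_neg, zpow_natCast]
          push_cast
          field_simp
          ring)
    -- the forest T
    obtain ⟨T, hTl, hTs, hTeq⟩ := forest_exists n (fun x => f (x / 2^N)) b hb0 hbmono hval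
      (by
        intro j hj c hc1 hc2
        have hcp : c < m * 2^N := by
          have h1 : b (j+1) ≤ b n := hble n (le_refl n) (j+1) (by omega)
          omega
        obtain ⟨d, w, hlin', heqw⟩ := hkey c hcp
        refine ⟨d, hlin', ⟨w - j * 2^d, ?_⟩⟩
        rw [heqw, zpow_neg, zpow_natCast]
        push_cast
        field_simp
        ring)
    -- scaling bijection
    have hscale : Set.BijOn (fun x => x / 2^N) (Set.Icc 0 ((m * 2^N : ℕ):ℝ)) (Set.Icc 0 (m:ℝ)) := by
      constructor
      · intro x hx
        have h1 := hx.1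
        have h2 := hx.2
        constructor
        · positivity
        · rw [div_le_iff₀ h2N]
          have h3 : ((m * 2^N : ℕ):ℝ) = (m:ℝ) * 2^N := by push_cast; ring
          linarith [h3 ▸ h2]
      constructor
      · intro x _ y _ h
        have h' : x / 2^N = y / 2^N := h
        field_simp at h'
        exact h'
      · intro y hy
        refine ⟨y * 2^N, ⟨mul_nonneg hy.1 (le_of_lt h2N), ?_⟩,
          by show y * 2^N / 2^N = y; field_simp⟩
        have h3 : ((m * 2^N : ℕ):ℝ) = (m:ℝ) * 2^N := by push_cast; ring
        rw [h3]
        exact mul_le_mul_of_nonneg_right hy.2 (le_of_lt h2N)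
    have hSeq' : ∀ x ∈ Set.Icc (0:ℝ) ((m * 2^N : ℕ):ℝ), forestMap S x = x / 2^N := by
      intro x hx
      exact hSeq x hx
    have hTeq' : ∀ x ∈ Set.Icc (0:ℝ) ((m * 2^N : ℕ):ℝ), forestMap T x = f (x / 2^N) := by
      intro x hx
      apply hTeq
      rw [hbn]
      exact hx
    refine ⟨m * 2^N, S, T, hSl, by rw [hSs], hTl, by rw [hTs, hbn], ?_, ?_, ?_⟩
    · -- DyadicPL p m (forestMap S)
      apply dyadicPL_of_blocks (m * 2^N) m _ (fun x => x / 2^N) hSeq' hscale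
      · intro c _
        exact ⟨c, N, by push_cast; ring⟩
      · intro c _
        refine ⟨-(N:ℤ), fun x hx => ?_⟩
        show x / 2^N = (c:ℝ)/2^N + (2:ℝ)^(-(N:ℤ)) * (x - (c:ℝ))
        rw [zpow_neg, zpow_natCast]
        ring
    · -- DyadicPL p n (forestMap T)
      apply dyadicPL_of_blocks (m * 2^N) n _ (fun x => f (x / 2^N)) hTeq'
      · exact hbijf.comp hscale
      · intro c hc
        rcases eq_or_lt_of_le hc with he | hlt
        · have := hval n (le_refl n)
          rw [hbn] at this
          rw [he]
          exact ⟨n, 0, by rw [this]; norm_num⟩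
        · obtain ⟨d, w, _, heqw⟩ := hkey c hlt
          exact ⟨w, d, heqw⟩
      · intro c hc
        obtain ⟨d, w, hlin', _⟩ := hkey c hc
        exact ⟨-(d:ℤ), hlin'⟩
    · -- the factorization equation
      intro x hx
      rw [hSeq' x hx, hTeq' x hx]
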